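/- arXiv:2006.03372 — 2 statements merged into one kernel-verified Lean document; each statement's English description precedes it below -/
import Mathlib

section
/- Let G = (V,E) be a finite undirected simple graph, h a positive integer, v ∈ V, and u ∈ N_v^h(G) with s = dis_G(u,v) (so 1 ≤ s ≤ h). Then N_u^h(G) \ (N_v^{h-s}(G) ∪ {v}) ⊆ N_u^h(G(V \ {v})); that is, every vertex w ≠ v that lies in the h-hop neighborhood of u in G but not in the (h−s)-hop neighborhood of v in G still lies in the h-hop neighborhood of u after deleting v from G. -/
open SimpleGraph

variable {V : Type*} [Fintype V] [DecidableEq V]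

/-- The subgraph of `G` induced by the vertex set `S`, viewed as a graph on the
same vertex type (edges are exactly the edges of `G` with both endpoints in `S`). -/
def SimpleGraph.inducedOn (G : SimpleGraph V) (S : Set V) : SimpleGraph V where
  Adj x y := G.Adj x y ∧ x ∈ S ∧ y ∈ S
  symm := ⟨fun _ _ ⟨ha, hx, hy⟩ => ⟨ha.symm, hy, hx⟩⟩
  loopless := ⟨fun x ⟨ha, _, _⟩ => G.loopless.irrefl x ha⟩

/-- The `h`-hop neighborhood of `v` in `G`:
all vertices `u ≠ v` with `dis_G(v,u) ≤ h`. -/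
def SimpleGraph.hNbhd (G : SimpleGraph V) (h : ℕ) (v : V) : Set V :=
  {u | u ≠ v ∧ G.edist v u ≤ (h : ℕ∞)}

/-- The `h`-degree of `v` in `G`: the number of vertices in its `h`-hop neighborhood. -/
noncomputable def SimpleGraph.hDeg (G : SimpleGraph V) (h : ℕ) (v : V) : ℕ :=
  (G.hNbhd h v).ncard

/-- Observation 1: for `u` in the `h`-hop neighborhood of `v` with `s = dis_G(u,v)`,
every vertex of `N_u^h(G)` outside `N_v^{h-s}(G) ∪ {v}` is still in the `h`-hop
neighborhood of `u` after deleting `v`. -/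
theorem stmt0 (G : SimpleGraph V) (h : ℕ) (hpos : 0 < h) (v u : V) (s : ℕ)
    (hu : u ∈ G.hNbhd h v) (hs : G.edist u v = (s : ℕ∞)) :
    G.hNbhd h u \ (G.hNbhd (h - s) v ∪ {v}) ⊆ (G.inducedOn {v}ᶜ).hNbhd h u := by
  obtain ⟨huv, hdvu⟩ := hu
  intro w hw
  obtain ⟨⟨hwu, hdw⟩, hnot⟩ := hw
  have hwv : w ≠ v := fun e => hnot (Or.inr e)
  have hvw : ¬ G.edist v w ≤ ((h - s : ℕ) : ℕ∞) := fun hle => hnot (Or.inl ⟨hwv, hle⟩)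
  have hsle : s ≤ h := by
    have : (s : ℕ∞) ≤ (h : ℕ∞) := by rw [← hs, SimpleGraph.edist_comm]; exact hdvu
    exact_mod_cast this
  -- get a shortest walk from u to w
  have hne : G.edist u w ≠ ⊤ := fun e => by simp [e] at hdw
  obtain ⟨p, hp⟩ := SimpleGraph.exists_walk_of_edist_ne_top hne
  have hplen : (p.length : ℕ∞) ≤ (h : ℕ∞) := by rw [hp]; exact hdw
  -- v is not on p
  have hvsupp : v ∉ p.support := by
    intro hv
    have hq : G.edist u v ≤ ((p.takeUntil v hv).length : ℕ∞) := SimpleGraph.edist_le _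
    have hr : G.edist v w ≤ ((p.dropUntil v hv).length : ℕ∞) := SimpleGraph.edist_le _
    have hsplit : (p.takeUntil v hv).length + (p.dropUntil v hv).length = p.length := by
      rw [← SimpleGraph.Walk.length_append, p.take_spec hv]
    have hfin : G.edist v w ≠ ⊤ := by
      intro e; rw [e] at hr; exact (by simp : ((p.dropUntil v hv).length : ℕ∞) ≠ ⊤)
        (top_le_iff.mp hr)
    lift G.edist v w to ℕ using hfin with t ht
    have htgt : h - s < t := by
      by_contra hle
      exact hvw (by exact_mod_cast Nat.le_of_not_lt hle)
    have hsum : (s : ℕ∞) + (t : ℕ∞) ≤ (p.length : ℕ∞) := by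
      calc (s : ℕ∞) + (t : ℕ∞) ≤ ((p.takeUntil v hv).length : ℕ∞)
            + ((p.dropUntil v hv).length : ℕ∞) := add_le_add (hs ▸ hq) hr
        _ = (p.length : ℕ∞) := by rw [← Nat.cast_add, hsplit]
    have : ((s + t : ℕ) : ℕ∞) ≤ (h : ℕ∞) := by
      push_cast; exact le_trans hsum hplen
    have : s + t ≤ h := by exact_mod_cast this
    omega
  -- transfer the walk to the induced graph
  have htr : ∀ e ∈ p.edges, e ∈ (G.inducedOn {v}ᶜ).edgeSet := by
    intro e he
    induction e with
    | h x y =>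
      refine (show G.Adj x y ∧ x ∈ ({v}ᶜ : Set V) ∧ y ∈ ({v}ᶜ : Set V) from ⟨p.edges_subset_edgeSet he, ?_, ?_⟩)
      · exact fun hx => hvsupp (hx ▸ SimpleGraph.Walk.fst_mem_support_of_mem_edges p he)
      · exact fun hy => hvsupp (hy ▸ SimpleGraph.Walk.snd_mem_support_of_mem_edges p he)
  have hdist : (G.inducedOn {v}ᶜ).edist u w ≤ (h : ℕ∞) :=
    le_trans (by simpa using SimpleGraph.edist_le (p.transfer _ htr)) hplen
  exact ⟨hwu, hdist⟩
end

section
/- Let G = (V,E) be a finite undirected simple graph and h, k positive integers. Call a subset S ⊆ V (k,h)-dense if every vertex v ∈ S satisfies d_v^h(G(S)) ≥ k. If S and T are both (k,h)-dense, then S ∪ T is (k,h)-dense. Consequently, there is a unique maximal (k,h)-dense subset of V (the (k,h)-core of G), namely the union of all (k,h)-dense subsets, and it contains every (k,h)-dense subset of V. -/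
open SimpleGraph

variable {V : Type*} [Fintype V] [DecidableEq V]

/-- `S` is `(k,h)`-dense in `G` if every vertex of `S` has `h`-degree at least `k`
in the subgraph induced by `S`. -/
def KHDense (G : SimpleGraph V) (h k : ℕ) (S : Set V) : Prop :=
  ∀ v ∈ S, k ≤ (G.inducedOn S).hDeg h v

lemma inducedOn_mono (G : SimpleGraph V) {S T : Set V} (hST : S ⊆ T) :
    G.inducedOn S ≤ G.inducedOn T := fun x y hxy => by
    obtain ⟨ha, hx, hy⟩ := hxy
    exact (⟨ha, hST hx, hST hy⟩ : G.Adj x y ∧ x ∈ T ∧ y ∈ T)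

lemma hDeg_mono {G G' : SimpleGraph V} (hle : G ≤ G') (h : ℕ) (v : V) :
    G.hDeg h v ≤ G'.hDeg h v := by
  apply Set.ncard_le_ncard _ (Set.toFinite _)
  intro u hu
  exact ⟨hu.1, le_trans (edist_anti hle) hu.2⟩

lemma KHDense_mono_union (G : SimpleGraph V) (h k : ℕ) {S T : Set V}
    (hS : KHDense G h k S) (hST : S ⊆ T) : ∀ v ∈ S, k ≤ (G.inducedOn T).hDeg h v :=
  fun v hv => le_trans (hS v hv) (hDeg_mono (inducedOn_mono G hST) h v)

/-- The union of two `(k,h)`-dense sets is `(k,h)`-dense; consequently the union of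
all `(k,h)`-dense subsets is the unique maximal `(k,h)`-dense subset (the
`(k,h)`-core), and it contains every `(k,h)`-dense subset. -/
theorem stmt11 (G : SimpleGraph V) (h k : ℕ) (hpos : 0 < h) (hk : 0 < k) :
    (∀ S T : Set V, KHDense G h k S → KHDense G h k T → KHDense G h k (S ∪ T)) ∧
    KHDense G h k (⋃₀ {S : Set V | KHDense G h k S}) ∧
    (∀ S : Set V, KHDense G h k S → S ⊆ ⋃₀ {S : Set V | KHDense G h k S}) := by
  refine ⟨fun S T hS hT v hv => ?_, fun v hv => ?_, fun S hS x hx => ⟨S, hS, hx⟩⟩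
  · rcases hv with hv | hv
    · exact KHDense_mono_union G h k hS Set.subset_union_left v hv
    · exact KHDense_mono_union G h k hT Set.subset_union_right v hv
  · rcases hv with ⟨S, hS, hvS⟩
    exact KHDense_mono_union G h k hS (Set.subset_sUnion_of_mem hS) v hvS
end
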